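/- Let W be the set of pairs (u,v) ∈ M that are top-reducible by no element of G, where G contains (1,f) and {g : (0,g) ∈ G} is a Gröbner basis of I_0. Then W contains no pair (u,v) with u = 0, and no pair (u,v) with LM(v) ∈ LM(I_0). -/

import Mathlib

open MvPowerSeries

namespace TateStmt

variable {n : ℕ} {O : Type*} [CommRing O]

/-- The Tate condition: the (π-adic) valuations of the coefficients tend to infinity. -/
def IsTate (π : O) (f : MvPowerSeries (Fin n) O) : Prop :=
  ∀ N : ℕ, {i : Fin n →₀ ℕ | ¬ π ^ N ∣ MvPowerSeries.coeff i f}.Finite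

/-- The integral Tate algebra `K{X}°`, as a subring of the ring of formal power series
over the valuation ring `O = K°`. -/
def TateAlgebra (n : ℕ) (O : Type*) [CommRing O] (π : O) :
    Subring (MvPowerSeries (Fin n) O) where
  carrier := {f | IsTate π f}
  zero_mem' := by
    intro N
    apply Set.Finite.subset (Set.finite_empty)
    intro i hi
    exact hi (Dvd.intro 0 (by simp))
  one_mem' := by
    intro N
    apply Set.Finite.subset (Set.finite_singleton (0 : Fin n →₀ ℕ))
    intro i hi
    by_contra h
    rw [Set.mem_singleton_iff] at h
    apply hi
    rw [MvPowerSeries.coeff_one, if_neg h]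
    exact Dvd.intro 0 (by simp)
  add_mem' := by
    intro f g hf hg N
    apply Set.Finite.subset ((hf N).union (hg N))
    intro i hi
    by_contra h
    simp only [Set.mem_union, Set.mem_setOf_eq, not_or, not_not] at h
    exact hi (by rw [map_add]; exact dvd_add h.1 h.2)
  neg_mem' := by
    intro f hf N
    apply Set.Finite.subset (hf N)
    intro i hi
    by_contra h
    simp only [Set.mem_setOf_eq, not_not] at h
    exact hi (by rw [map_neg]; exact (dvd_neg).mpr h)
  mul_mem' := by
    intro f g hf hg N
    apply Set.Finite.subset (Set.Finite.add (hf N) (hg N))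
    intro i hi
    by_contra h
    apply hi
    rw [MvPowerSeries.coeff_mul]
    apply Finset.dvd_sum
    intro p hp
    rw [Finset.HasAntidiagonal.mem_antidiagonal] at hp
    by_cases h1 : π ^ N ∣ MvPowerSeries.coeff p.1 f
    · exact Dvd.dvd.mul_right h1 _
    · by_cases h2 : π ^ N ∣ MvPowerSeries.coeff p.2 g
      · exact Dvd.dvd.mul_left h2 _
      · exact absurd (hp ▸ Set.add_mem_add h1 h2) h

/-- Tate monomials `π^a X^i`, identified with pairs `(a, i) ∈ ℕ × ℕ^n`. -/
abbrev TMon (n : ℕ) := ℕ × (Fin n →₀ ℕ)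

noncomputable def monMul (a b : TMon n) : TMon n := (a.1 + b.1, a.2 + b.2)
def monDvd (a b : TMon n) : Prop := a.1 ≤ b.1 ∧ a.2 ≤ b.2
noncomputable def monDiv (a b : TMon n) : TMon n := (a.1 - b.1, a.2 - b.2)
noncomputable def monLcm (a b : TMon n) : TMon n := (max a.1 b.1, a.2 ⊔ b.2)

/-- The valuation-first term order: compare valuations first (a *smaller* valuation gives a
*larger* term), then exponents via the monomial order `mo`. -/
def termLT (mo : MonomialOrder (Fin n)) (a b : TMon n) : Prop :=
  b.1 < a.1 ∨ (a.1 = b.1 ∧ mo.toSyn a.2 < mo.toSyn b.2)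

def termLE (mo : MonomialOrder (Fin n)) (a b : TMon n) : Prop :=
  a = b ∨ termLT mo a b

/-- Order on `Option (TMon n)`, where `none` (the "monomial" of `0`) is smallest. -/
def optLT (mo : MonomialOrder (Fin n)) : Option (TMon n) → Option (TMon n) → Prop
  | none, none => False
  | none, some _ => True
  | some _, none => False
  | some a, some b => termLT mo a b

def optLE (mo : MonomialOrder (Fin n)) (a b : Option (TMon n)) : Prop :=
  a = b ∨ optLT mo a b

noncomputable def optMul (t : TMon n) : Option (TMon n) → Option (TMon n)
  | none => none
  | some a => some (monMul t a)

/-- `(a, i)` is (the monomial of) a term of `f`: the coefficient of `X^i` has valuation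
exactly `a`. -/
def IsTerm (π : O) (f : MvPowerSeries (Fin n) O) (m : TMon n) : Prop :=
  π ^ m.1 ∣ MvPowerSeries.coeff m.2 f ∧ ¬ π ^ (m.1 + 1) ∣ MvPowerSeries.coeff m.2 f

/-- `m` is the leading monomial of `f`. -/
def IsLM (π : O) (mo : MonomialOrder (Fin n)) (f : MvPowerSeries (Fin n) O) (m : TMon n) :
    Prop :=
  IsTerm π f m ∧ ∀ m', IsTerm π f m' → termLE mo m' m

/-- `s` is the leading monomial of `f`, with the convention `LM 0 = none`. -/
def IsLMopt (π : O) (mo : MonomialOrder (Fin n)) (f : MvPowerSeries (Fin n) O) :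
    Option (TMon n) → Prop
  | none => f = 0
  | some m => IsLM π mo f m

/-- All coefficients of `f` are divisible by `π^N`, i.e. `val f ≥ N`. -/
def DvdAll (π : O) (N : ℕ) (f : MvPowerSeries (Fin n) O) : Prop :=
  ∀ i, π ^ N ∣ MvPowerSeries.coeff i f

/-- The Gauss valuation of `f` is exactly `N`. -/
def ValEq (π : O) (f : MvPowerSeries (Fin n) O) (N : ℕ) : Prop :=
  DvdAll π N f ∧ ¬ DvdAll π (N + 1) f

/-- `G` is a Gröbner basis of the ideal `I` of the (integral) Tate algebra. -/
def IsGB (π : O) (mo : MonomialOrder (Fin n)) (G : Set (TateAlgebra n O π))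
    (I : Ideal (TateAlgebra n O π)) : Prop :=
  (∀ g ∈ G, g ∈ I) ∧
    ∀ f ∈ I, (f : MvPowerSeries (Fin n) O) ≠ 0 → ∀ mf,
      IsLM π mo (f : MvPowerSeries (Fin n) O) mf →
        ∃ g ∈ G, ∃ mg, IsLM π mo (g : MvPowerSeries (Fin n) O) mg ∧ monDvd mg mf

/-- The module `M = {(u,v) : u f - v ∈ I₀}`. -/
def SigMod {π : O} (I0 : Ideal (TateAlgebra n O π)) (f : TateAlgebra n O π) :
    Set (TateAlgebra n O π × TateAlgebra n O π) :=
  {p | p.1 * f - p.2 ∈ I0}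

/-- `p = (u₁,v₁)` is top-reducible by `q = (u₂,v₂)`. -/
def TopRed (π : O) (mo : MonomialOrder (Fin n))
    (p q : TateAlgebra n O π × TateAlgebra n O π) : Prop :=
  (q.2 = 0 ∧ ∃ mu mq, IsLM π mo (p.1 : MvPowerSeries (Fin n) O) mu ∧
      IsLM π mo (q.1 : MvPowerSeries (Fin n) O) mq ∧ monDvd mq mu)
  ∨ (p.2 ≠ 0 ∧ q.2 ≠ 0 ∧
      ∃ m1 m2, IsLM π mo (p.2 : MvPowerSeries (Fin n) O) m1 ∧
        IsLM π mo (q.2 : MvPowerSeries (Fin n) O) m2 ∧ monDvd m2 m1 ∧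
        ∃ s1 s2, IsLMopt π mo (p.1 : MvPowerSeries (Fin n) O) s1 ∧
          IsLMopt π mo (q.1 : MvPowerSeries (Fin n) O) s2 ∧
          optLE mo (optMul (monDiv m1 m2) s2) s1)

/-- `G` is a strong Gröbner basis of the module `M = SigMod I0 f`. -/
def IsSGB (π : O) (mo : MonomialOrder (Fin n)) (I0 : Ideal (TateAlgebra n O π))
    (f : TateAlgebra n O π) (G : Set (TateAlgebra n O π × TateAlgebra n O π)) : Prop :=
  G.Finite ∧ G ⊆ SigMod I0 f ∧
    ∀ p ∈ SigMod I0 f, p ≠ 0 → ∃ q ∈ G, TopRed π mo p q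

/-- `p` is covered by `q`. -/
def Covers (π : O) (mo : MonomialOrder (Fin n))
    (q p : TateAlgebra n O π × TateAlgebra n O π) : Prop :=
  ∃ mu mq, IsLM π mo (p.1 : MvPowerSeries (Fin n) O) mu ∧
    IsLM π mo (q.1 : MvPowerSeries (Fin n) O) mq ∧ monDvd mq mu ∧
    ∃ sv sp, IsLMopt π mo (q.2 : MvPowerSeries (Fin n) O) sv ∧
      IsLMopt π mo (p.2 : MvPowerSeries (Fin n) O) sp ∧
      optLT mo (optMul (monDiv mu mq) sv) sp

def CoveredBy (π : O) (mo : MonomialOrder (Fin n))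
    (p : TateAlgebra n O π × TateAlgebra n O π)
    (G : Set (TateAlgebra n O π × TateAlgebra n O π)) : Prop :=
  ∃ q ∈ G, Covers π mo q p

/-- The Tate series `π^a X^i`, as an element of the Tate algebra. -/
noncomputable def monTA (π : O) (m : TMon n) : TateAlgebra n O π :=
  ⟨MvPowerSeries.monomial m.2 (π ^ m.1), by
    intro N
    apply Set.Finite.subset (Set.finite_singleton m.2)
    intro i hi
    by_contra h
    rw [Set.mem_singleton_iff] at h
    apply hi
    rw [MvPowerSeries.coeff_monomial, if_neg h]
    exact Dvd.intro 0 (by simp)⟩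

noncomputable def smulPair (π : O) (m : TMon n) (p : TateAlgebra n O π × TateAlgebra n O π) :
    TateAlgebra n O π × TateAlgebra n O π :=
  (monTA π m * p.1, monTA π m * p.2)

/-- `r` is the J-pair of `(p, q)` (with `p` carrying the larger signature part). -/
def IsJPair (π : O) (mo : MonomialOrder (Fin n))
    (p q r : TateAlgebra n O π × TateAlgebra n O π) : Prop :=
  ∃ m1 m2, IsLM π mo (p.2 : MvPowerSeries (Fin n) O) m1 ∧
    IsLM π mo (q.2 : MvPowerSeries (Fin n) O) m2 ∧
    (∃ s1 s2, IsLMopt π mo (p.1 : MvPowerSeries (Fin n) O) s1 ∧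
      IsLMopt π mo (q.1 : MvPowerSeries (Fin n) O) s2 ∧
      optLT mo (optMul (monDiv (monLcm m1 m2) m2) s2)
        (optMul (monDiv (monLcm m1 m2) m1) s1)) ∧
    r = smulPair π (monDiv (monLcm m1 m2) m1) p

section Residue

variable {k : Type*} [Field k]

/-- `P = ρ(f)`, the reduction mod `π` of `π^{-val f} f`. -/
def IsRho (π : O) (φ : O →+* k) (f : MvPowerSeries (Fin n) O)
    (P : MvPolynomial (Fin n) k) : Prop :=
  ∃ (N : ℕ) (g : MvPowerSeries (Fin n) O), f = (π ^ N) • g ∧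
    (∃ i, ¬ π ∣ MvPowerSeries.coeff i g) ∧
    ∀ i, MvPolynomial.coeff i P = φ (MvPowerSeries.coeff i g)

def rhoSet (π : O) (φ : O →+* k) (S : Set (TateAlgebra n O π)) :
    Set (MvPolynomial (Fin n) k) :=
  {P | ∃ f ∈ S, IsRho π φ (f : MvPowerSeries (Fin n) O) P}

/-- `Ī_N`: the image in `k[X]` of `π^{-N} (I ∩ π^N K{X}°)`. -/
def BarIdeal (π : O) (φ : O →+* k) (I : Ideal (TateAlgebra n O π)) (N : ℕ) :
    Set (MvPolynomial (Fin n) k) :=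
  {P | ∃ f ∈ I, ∃ g : MvPowerSeries (Fin n) O, (f : MvPowerSeries (Fin n) O) = (π ^ N) • g ∧
    ∀ i, MvPolynomial.coeff i P = φ (MvPowerSeries.coeff i g)}

/-- `d` is the leading exponent of the polynomial `P` for the monomial order `mo`. -/
def IsPolyLM (mo : MonomialOrder (Fin n)) (P : MvPolynomial (Fin n) k)
    (d : Fin n →₀ ℕ) : Prop :=
  MvPolynomial.coeff d P ≠ 0 ∧ ∀ e, MvPolynomial.coeff e P ≠ 0 → mo.toSyn e ≤ mo.toSyn d

/-- `G` is a Gröbner basis of the set (ideal) `J` of polynomials over the residue field. -/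
def IsPolyGB (mo : MonomialOrder (Fin n)) (G : Set (MvPolynomial (Fin n) k))
    (J : Set (MvPolynomial (Fin n) k)) : Prop :=
  G ⊆ J ∧ ∀ P ∈ J, P ≠ 0 → ∀ d, IsPolyLM mo P d →
    ∃ Q ∈ G, ∃ e, IsPolyLM mo Q e ∧ e ≤ d

end Residue

end TateStmt


open TateStmt MvPowerSeries

variable {n : ℕ} {O : Type*} [CommRing O] [IsDomain O] [IsDiscreteValuationRing O]


lemma exists_isLM (π : O) (hπ : Irreducible π) (mo : MonomialOrder (Fin n))
    {f : MvPowerSeries (Fin n) O} (hT : IsTate π f) (hf : f ≠ 0) :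
    ∃ m, IsLM π mo f m := by
  classical
  have hex : ∃ a : ℕ, ∃ i, IsTerm π f (a, i) := by
    have hco : ∃ i, MvPowerSeries.coeff i f ≠ 0 := by
      by_contra h
      push_neg at h
      exact hf (MvPowerSeries.ext fun i => by simp [h i])
    obtain ⟨i, hi⟩ := hco
    obtain ⟨a, u, hu⟩ := IsDiscreteValuationRing.eq_unit_mul_pow_irreducible hi hπ
    refine ⟨a, i, ⟨⟨u, by rw [hu]; ring⟩, ?_⟩⟩
    rintro ⟨c, hc⟩
    apply hπ.not_isUnit
    have heq : (π : O) ^ a * (u : O) = π ^ a * (π * c) := by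
      rw [mul_comm ((π:O)^a) (u:O), ← hu, hc]; ring
    have hu' : (u : O) = π * c :=
      mul_left_cancel₀ (pow_ne_zero _ hπ.ne_zero) heq
    exact isUnit_of_dvd_unit ⟨c, hu'⟩ u.isUnit
  have hP : ∃ a : ℕ, ∃ i, IsTerm π f (a, i) := hex
  obtain ⟨i1, hi1⟩ := Nat.find_spec hP
  set a0 := Nat.find hP with ha0
  have hfin2 : {j | IsTerm π f (a0, j)}.Finite :=
    (hT (a0 + 1)).subset (fun j hj => hj.2)
  obtain ⟨i0, hi0, hmax⟩ :=
    Set.exists_max_image _ (fun j => mo.toSyn j) hfin2 ⟨i1, hi1⟩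
  refine ⟨(a0, i0), hi0, ?_⟩
  rintro ⟨b, j⟩ hbj
  have hb : a0 ≤ b := Nat.find_min' hP ⟨j, hbj⟩
  rcases lt_or_eq_of_le hb with hlt | heq
  · exact Or.inr (Or.inl hlt)
  · have hj : j ∈ {j | IsTerm π f (a0, j)} := by
      rw [heq]; exact hbj
    rcases (hmax j hj).lt_or_eq with hlt2 | heq2
    · exact Or.inr (Or.inr ⟨heq.symm, hlt2⟩)
    · exact Or.inl (Prod.ext heq.symm (mo.toSyn.injective heq2))

lemma isLM_ne_zero {π : O} {mo : MonomialOrder (Fin n)} {f : MvPowerSeries (Fin n) O}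
    {m : TMon n} (hm : IsLM π mo f m) : f ≠ 0 := by
  intro h0
  exact hm.1.2 (by rw [h0]; simpa using dvd_zero _)

/-- the set `W` of (nonzero) pairs of `M` that are top-reducible by no
element of `G` contains no pair `(u,v)` with `u = 0`, and no pair with `LM(v) ∈ LM(I₀)`. -/
theorem statement_9 (π : O) (hπ : Irreducible π) (mo : MonomialOrder (Fin n))
    (I0 : Ideal (TateAlgebra n O π)) (f : TateAlgebra n O π)
    (G : Set (TateAlgebra n O π × TateAlgebra n O π))
    (hfin : G.Finite) (hGM : G ⊆ SigMod I0 f)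
    (h1f : ((1 : TateAlgebra n O π), f) ∈ G)
    (hG0 : IsGB π mo {g : TateAlgebra n O π | ((0 : TateAlgebra n O π), g) ∈ G} I0) :
    ∀ p ∈ SigMod I0 f, p ≠ 0 → (∀ q ∈ G, ¬ TopRed π mo p q) →
      p.1 ≠ 0 ∧
      ∀ m, IsLM π mo (p.2 : MvPowerSeries (Fin n) O) m →
        ¬ ∃ h ∈ I0, (h : MvPowerSeries (Fin n) O) ≠ 0 ∧
          IsLM π mo (h : MvPowerSeries (Fin n) O) m := by
  intro p hp hpne hnored
  have hcoe2 : ∀ x : TateAlgebra n O π, (x : MvPowerSeries (Fin n) O) = 0 → x = 0 :=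
    fun x hx => Subtype.ext hx
  have key : p.1 ≠ 0 := by
    intro h10
    have h2 : p.2 ≠ 0 := by
      intro h20
      exact hpne (Prod.ext h10 h20)
    have h2s : (p.2 : MvPowerSeries (Fin n) O) ≠ 0 := fun hx => h2 (hcoe2 _ hx)
    have hvI : p.2 ∈ I0 := by
      have hmem : p.1 * f - p.2 ∈ I0 := hp
      rw [h10, zero_mul, zero_sub] at hmem
      simpa using I0.neg_mem hmem
    obtain ⟨m, hm⟩ := exists_isLM π hπ mo p.2.2 h2s
    obtain ⟨g, hgG, mg, hlmg, hdvd⟩ := hG0.2 p.2 hvI h2s m hm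
    apply hnored (0, g) hgG
    have hgne : g ≠ 0 := fun hg0 => isLM_ne_zero hlmg (by rw [hg0]; simp)
    refine Or.inr ⟨h2, hgne, m, mg, hm, hlmg, hdvd, none, none, ?_, ?_, Or.inl rfl⟩
    · show (p.1 : MvPowerSeries (Fin n) O) = 0
      rw [h10]; simp
    · show ((0 : TateAlgebra n O π) : MvPowerSeries (Fin n) O) = 0
      simp
  refine ⟨key, ?_⟩
  rintro m hm ⟨h, hhI, hhne, hlmh⟩
  obtain ⟨g, hgG, mg, hlmg, hdvd⟩ := hG0.2 h hhI hhne m hlmh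
  have h2ne : p.2 ≠ 0 := fun h0 => isLM_ne_zero hm (by rw [h0]; simp)
  have hgne : g ≠ 0 := fun hg0 => isLM_ne_zero hlmg (by rw [hg0]; simp)
  have hs1 : ∃ s1, IsLMopt π mo (p.1 : MvPowerSeries (Fin n) O) s1 := by
    by_cases h10 : (p.1 : MvPowerSeries (Fin n) O) = 0
    · exact ⟨none, h10⟩
    · obtain ⟨m1, hm1⟩ := exists_isLM π hπ mo p.1.2 h10
      exact ⟨some m1, hm1⟩
  obtain ⟨s1, hs1⟩ := hs1
  apply hnored (0, g) hgG
  refine Or.inr ⟨h2ne, hgne, m, mg, hm, hlmg, hdvd, s1, none, hs1, ?_, ?_⟩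
  · show ((0 : TateAlgebra n O π) : MvPowerSeries (Fin n) O) = 0
    simp
  · cases s1 with
    | none => exact Or.inl rfl
    | some _ => exact Or.inr trivial
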